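/- arXiv:2201.06798 — 2 statements merged into one kernel-verified Lean document; each statement's English description precedes it below -/
import Mathlib

section
/- If the series Σ_{i≥0} E(Uⁱf | 𝓕₀) converges in L¹(ℙ), then there exist m, g ∈ L¹(ℙ), with m measurable with respect to 𝓕₀ and E(m | 𝓕₋₁) = 0 a.s. (so that (Uⁱm)_{i≥0} is a stationary sequence of martingale differences), such that f = m + g − Ug. -/
open MeasureTheory Filter ProbabilityTheory Topology
open scoped ENNReal NNReal

/-- `zIter T n` is the `n`-th iterate (for `n : ℤ`) of the bimeasurable bijection `T`. -/
noncomputable def zIter {Ω : Type*} {mΩ : MeasurableSpace Ω} (T : Ω ≃ᵐ Ω) (n : ℤ) : Ω → Ω :=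
  fun ω => if 0 ≤ n then (⇑T)^[n.toNat] ω else (⇑T.symm)^[(-n).toNat] ω

/-- Uniqueness of L¹ limits. -/
lemma gordin_l1_limit_unique {Ω : Type*} [mΩ : MeasurableSpace Ω] {μ : Measure Ω}
    {a : ℕ → Ω → ℝ} {x y : Ω → ℝ}
    (hax : ∀ n, Integrable (fun ω => a n ω - x ω) μ)
    (hay : ∀ n, Integrable (fun ω => a n ω - y ω) μ)
    (hxy : Integrable (fun ω => x ω - y ω) μ)
    (hx : Tendsto (fun n => ∫ ω, |a n ω - x ω| ∂μ) atTop (𝓝 0))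
    (hy : Tendsto (fun n => ∫ ω, |a n ω - y ω| ∂μ) atTop (𝓝 0)) :
    x =ᵐ[μ] y := by
  have hbound : ∀ n, ∫ ω, |x ω - y ω| ∂μ ≤
      (∫ ω, |a n ω - x ω| ∂μ) + ∫ ω, |a n ω - y ω| ∂μ := by
    intro n
    rw [← integral_add ((hax n).abs) ((hay n).abs)]
    refine integral_mono hxy.abs (((hax n).abs).add ((hay n).abs)) (fun ω => ?_)
    have h1 : x ω - y ω = (a n ω - y ω) - (a n ω - x ω) := by ring
    rw [h1]
    exact (abs_sub _ _).trans (by rw [add_comm])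
  have hzero : ∫ ω, |x ω - y ω| ∂μ = 0 := by
    have h0 : Tendsto (fun n => (∫ ω, |a n ω - x ω| ∂μ) + ∫ ω, |a n ω - y ω| ∂μ)
        atTop (𝓝 0) := by simpa using hx.add hy
    have hle : ∫ ω, |x ω - y ω| ∂μ ≤ 0 := le_of_tendsto_of_tendsto tendsto_const_nhds h0
      (Eventually.of_forall hbound)
    exact le_antisymm hle (integral_nonneg fun ω => abs_nonneg _)
  have hae := (integral_eq_zero_iff_of_nonneg_ae (Eventually.of_forall fun ω => abs_nonneg _)
      hxy.abs).mp hzero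
  filter_upwards [hae] with ω hω
  have h2 : |x ω - y ω| = 0 := hω
  have h3 := abs_eq_zero.mp h2
  linarith

/-- Transfer of conditional expectation along a measure preserving equivalence. -/
lemma gordin_condexp_comp_equiv {Ω : Type*} [mΩ : MeasurableSpace Ω] (μ : Measure Ω)
    [IsProbabilityMeasure μ] (S : Ω ≃ᵐ Ω) (hS : MeasurePreserving S μ μ)
    (G : MeasurableSpace Ω) (hG : G ≤ mΩ) (φ : Ω → ℝ) (hφ : Integrable φ μ) :
    (fun ω => (μ[φ|G]) (S ω)) =ᵐ[μ] μ[fun ω => φ (S ω) | G.comap S] := by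
  letI mΩ' : MeasurableSpace Ω := mΩ
  have hSmG : @Measurable Ω Ω mΩ G S := S.measurable.mono le_rfl hG
  have hcomap_le : G.comap S ≤ mΩ := Measurable.comap_le hSmG
  haveI : SigmaFinite (μ.trim hcomap_le) := by infer_instance
  have hmapS : Measure.map S μ = μ := hS.map_eq
  have hSmeasG : @Measurable Ω Ω (G.comap S) G S := fun A hA => ⟨A, hA, rfl⟩
  have hφS : Integrable (fun ω => φ (S ω)) μ :=
    (hS.integrable_comp hφ.aestronglyMeasurable).mpr hφ
  have hceS : Integrable (fun ω => (μ[φ|G]) (S ω)) μ :=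
    (hS.integrable_comp integrable_condExp.aestronglyMeasurable).mpr integrable_condExp
  refine ae_eq_condExp_of_forall_setIntegral_eq hcomap_le hφS
    (fun s _ _ => hceS.integrableOn) ?_ ?_
  · intro s hs _
    obtain ⟨A, hA, rfl⟩ := hs
    have hA' : MeasurableSet A := hG A hA
    have h1 : ∫ ω in S ⁻¹' A, (μ[φ|G]) (S ω) ∂μ = ∫ ω in A, (μ[φ|G]) ω ∂μ := by
      rw [← hmapS, setIntegral_map hA'
        (by rw [hmapS]; exact integrable_condExp.aestronglyMeasurable)
        (hS.measurable.aemeasurable)]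
      rw [hmapS]
    have h2 : ∫ ω in S ⁻¹' A, φ (S ω) ∂μ = ∫ ω in A, φ ω ∂μ := by
      rw [← hmapS, setIntegral_map hA'
        (by rw [hmapS]; exact hφ.aestronglyMeasurable) (hS.measurable.aemeasurable)]
      rw [hmapS]
    rw [h1, h2, setIntegral_condExp hG hφ hA]
  · exact ((stronglyMeasurable_condExp (m := G) (f := φ) (μ := μ)).comp_measurable hSmeasG).aestronglyMeasurable

/-- **Martingale–coboundary decomposition (Gordin).** If the series `Σ_{i≥0} E(Uⁱf | 𝓕₀)`
converges in `L¹(ℙ)`, then there exist `m, g ∈ L¹(ℙ)`, with `m` measurable with respect to `𝓕₀`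
and `E(m | 𝓕₋₁) = 0` a.s. (so that `(Uⁱm)_{i≥0}` is a stationary sequence of martingale
differences), such that `f = m + g − Ug`. -/
theorem martingale_coboundary_decomposition
    {Ω : Type*} [mΩ : MeasurableSpace Ω] (μ : Measure Ω) [IsProbabilityMeasure μ]
    (T : Ω ≃ᵐ Ω) (hT : MeasurePreserving T μ μ) (hTerg : Ergodic T μ)
    (F0 : MeasurableSpace Ω) (hF0le : F0 ≤ mΩ)
    (hF0T : F0 ≤ F0.comap T)
    (f : Ω → ℝ) (hf_meas : Measurable[F0] f) (hf_int : Integrable f μ)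
    (hf_cent : ∫ ω, f ω ∂μ = 0)
    -- the series Σ_{i ≥ 0} E(Uⁱ f | 𝓕₀) converges in L¹(ℙ)
    (hL1 : ∃ h : Ω → ℝ, Integrable h μ ∧
      Tendsto (fun n : ℕ => ∫ ω, |(∑ i ∈ Finset.range n,
          (μ[fun ω' => f ((⇑T)^[i] ω') | F0]) ω) - h ω| ∂μ) atTop (𝓝 0)) :
    ∃ m g : Ω → ℝ, Integrable m μ ∧ Integrable g μ ∧ Measurable[F0] m ∧
      -- (Uⁱm) is a stationary martingale differences sequence: E(m | 𝓕₋₁) = 0 a.s.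
      μ[m | MeasurableSpace.comap (zIter T (-1)) F0] =ᵐ[μ] 0 ∧
      ∀ᵐ ω ∂μ, f ω = m ω + g ω - g (T ω) := by
  letI mΩ' : MeasurableSpace Ω := mΩ
  haveI : SigmaFinite (μ.trim hF0le) := by infer_instance
  obtain ⟨h, hh_int, hh_tend⟩ := hL1
  -- notation
  set a : ℕ → Ω → ℝ := fun i => μ[fun ω' => f ((⇑T)^[i] ω') | F0] with ha_def
  have hfi_int : ∀ i : ℕ, Integrable (fun ω' => f ((⇑T)^[i] ω')) μ := fun i =>
    ((hT.iterate i).integrable_comp hf_int.aestronglyMeasurable).mpr hf_int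
  have ha_int : ∀ i, Integrable (a i) μ := fun i => integrable_condExp
  have ha_meas : ∀ i, StronglyMeasurable[F0] (a i) := fun i => stronglyMeasurable_condExp
  have hS_int : ∀ n : ℕ, Integrable (fun ω => ∑ i ∈ Finset.range n, a i ω) μ := fun n => by
    simpa using integrable_finset_sum (Finset.range n) (fun i _ => ha_int i)
  have hS_meas : ∀ n : ℕ, StronglyMeasurable[F0] (fun ω => ∑ i ∈ Finset.range n, a i ω) :=
    fun n => by
      have : ∀ i ∈ Finset.range n, StronglyMeasurable[F0] (a i) := fun i _ => ha_meas i
      exact Finset.stronglyMeasurable_fun_sum (Finset.range n) this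
  -- the F0-measurable representative of h
  set h' : Ω → ℝ := μ[h | F0] with hh'_def
  have hh'_int : Integrable h' μ := integrable_condExp
  -- contraction of condexp in L¹
  have hcontract : ∀ (φ ψ : Ω → ℝ), Integrable φ μ → Integrable ψ μ →
      ∫ ω, |(μ[φ|F0]) ω - (μ[ψ|F0]) ω| ∂μ ≤ ∫ ω, |φ ω - ψ ω| ∂μ := by
    intro φ ψ hφ hψ
    have h1 : ∫ ω, |(μ[φ - ψ|F0]) ω| ∂μ ≤ ∫ ω, |(φ - ψ) ω| ∂μ := integral_abs_condExp_le _
    have h2 : μ[φ - ψ|F0] =ᵐ[μ] μ[φ|F0] - μ[ψ|F0] := condExp_sub hφ hψ F0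
    calc ∫ ω, |(μ[φ|F0]) ω - (μ[ψ|F0]) ω| ∂μ = ∫ ω, |(μ[φ - ψ|F0]) ω| ∂μ := by
          refine integral_congr_ae ?_
          filter_upwards [h2] with ω hω
          rw [hω]; simp
      _ ≤ ∫ ω, |φ ω - ψ ω| ∂μ := by simpa using h1
  -- L¹ convergence of the partial sums to h'
  have hSh : Tendsto (fun n => ∫ ω, |(∑ i ∈ Finset.range n, a i ω) - h ω| ∂μ)
      atTop (𝓝 0) := hh_tend
  have hSh' : Tendsto (fun n => ∫ ω, |(∑ i ∈ Finset.range n, a i ω) - h' ω| ∂μ)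
      atTop (𝓝 0) := by
    refine squeeze_zero (fun n => integral_nonneg fun ω => abs_nonneg _) (fun n => ?_) hSh
    have hcn : μ[fun ω => ∑ i ∈ Finset.range n, a i ω|F0] =
        fun ω => ∑ i ∈ Finset.range n, a i ω :=
      condExp_of_stronglyMeasurable hF0le (hS_meas n) (hS_int n)
    calc ∫ ω, |(∑ i ∈ Finset.range n, a i ω) - h' ω| ∂μ
        = ∫ ω, |(μ[fun ω => ∑ i ∈ Finset.range n, a i ω|F0]) ω - (μ[h|F0]) ω| ∂μ := by
          rw [hcn]
      _ ≤ ∫ ω, |(∑ i ∈ Finset.range n, a i ω) - h ω| ∂μ := hcontract _ _ (hS_int n) hh_int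
  -- one-step shift of the conditional expectations
  have hF1le : F0.comap T ≤ mΩ := Measurable.comap_le (T.measurable.mono le_rfl hF0le)
  have hstep : ∀ i : ℕ, μ[fun ω => a i (T ω)|F0] =ᵐ[μ] a (i + 1) := by
    intro i
    have htr := gordin_condexp_comp_equiv μ T hT F0 hF0le _ (hfi_int i)
    have heq : (fun ω => f ((⇑T)^[i] (T ω))) = fun ω => f ((⇑T)^[i + 1] ω) := by
      funext ω; rw [Function.iterate_succ_apply]
    have h1 : μ[fun ω => a i (T ω)|F0] =ᵐ[μ]
        μ[μ[fun ω => f ((⇑T)^[i] (T ω))|F0.comap T]|F0] := condExp_congr_ae htr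
    have h2 : μ[μ[fun ω => f ((⇑T)^[i] (T ω))|F0.comap T]|F0] =ᵐ[μ]
        μ[fun ω => f ((⇑T)^[i] (T ω))|F0] := condExp_condExp_of_le hF0T hF1le
    refine h1.trans (h2.trans ?_)
    rw [heq]
  -- conditional expectation of the shifted partial sums
  have ha0 : a 0 = f := by
    have : (fun ω' => f ((⇑T)^[0] ω')) = f := by funext ω; simp
    rw [ha_def]; simp only [this]
    exact condExp_of_stronglyMeasurable hF0le hf_meas.stronglyMeasurable hf_int
  have haT_int : ∀ i : ℕ, Integrable (fun ω => a i (T ω)) μ := fun i =>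
    (hT.integrable_comp (ha_int i).aestronglyMeasurable).mpr (ha_int i)
  have hSstep : ∀ n : ℕ, μ[fun ω => ∑ i ∈ Finset.range n, a i (T ω)|F0] =ᵐ[μ]
      fun ω => (∑ i ∈ Finset.range (n + 1), a i ω) - f ω := by
    intro n
    have hsum_eq : (fun ω => ∑ i ∈ Finset.range n, a i (T ω)) =
        ∑ i ∈ Finset.range n, fun ω => a i (T ω) := by
      funext ω; simp [Finset.sum_apply]
    have h1 : μ[fun ω => ∑ i ∈ Finset.range n, a i (T ω)|F0] =ᵐ[μ]
        ∑ i ∈ Finset.range n, μ[fun ω => a i (T ω)|F0] := by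
      rw [hsum_eq]
      exact condExp_finset_sum (fun i _ => haT_int i) F0
    have h2 : (∑ i ∈ Finset.range n, μ[fun ω => a i (T ω)|F0] : Ω → ℝ) =ᵐ[μ]
        fun ω => ∑ i ∈ Finset.range n, a (i + 1) ω := by
      have hall : ∀ᵐ ω ∂μ, ∀ i ∈ Finset.range n,
          (μ[fun ω => a i (T ω)|F0]) ω = a (i + 1) ω := by
        exact (Filter.eventually_all_finset (Finset.range n)).mpr fun i _ => hstep i
      filter_upwards [hall] with ω hω
      rw [Finset.sum_apply]
      exact Finset.sum_congr rfl hω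
    refine h1.trans (h2.trans (Eventually.of_forall fun ω => ?_))
    show ∑ i ∈ Finset.range n, a (i + 1) ω = (∑ i ∈ Finset.range (n + 1), a i ω) - f ω
    rw [Finset.sum_range_succ' (fun i => a i ω) n, ha0]
    ring
  -- definition of k and the key identity k = h' - f a.e.
  set k : Ω → ℝ := μ[fun ω => h' (T ω)|F0] with hk_def
  have hk_int : Integrable k μ := integrable_condExp
  have hh'T_int : Integrable (fun ω => h' (T ω)) μ :=
    (hT.integrable_comp hh'_int.aestronglyMeasurable).mpr hh'_int
  have hb_int : ∀ n : ℕ, Integrable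
      (fun ω => (∑ i ∈ Finset.range (n + 1), a i ω) - f ω) μ := fun n =>
    (hS_int (n + 1)).sub hf_int
  have hbk : Tendsto
      (fun n => ∫ ω, |((∑ i ∈ Finset.range (n + 1), a i ω) - f ω) - k ω| ∂μ)
      atTop (𝓝 0) := by
    refine squeeze_zero (fun n => integral_nonneg fun ω => abs_nonneg _) (fun n => ?_)
      hSh'
    have hcongr : ∫ ω, |((∑ i ∈ Finset.range (n + 1), a i ω) - f ω) - k ω| ∂μ =
        ∫ ω, |(μ[fun ω => ∑ i ∈ Finset.range n, a i (T ω)|F0]) ω -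
          (μ[fun ω => h' (T ω)|F0]) ω| ∂μ := by
      refine integral_congr_ae ?_
      filter_upwards [hSstep n] with ω hω
      rw [hω]
    rw [hcongr]
    calc ∫ ω, |(μ[fun ω => ∑ i ∈ Finset.range n, a i (T ω)|F0]) ω -
          (μ[fun ω => h' (T ω)|F0]) ω| ∂μ
        ≤ ∫ ω, |(∑ i ∈ Finset.range n, a i (T ω)) - h' (T ω)| ∂μ := by
          have := hcontract (fun ω => ∑ i ∈ Finset.range n, a i (T ω))
            (fun ω => h' (T ω))
            ((hT.integrable_comp (hS_int n).aestronglyMeasurable).mpr (hS_int n)) hh'T_int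
          simpa using this
      _ = ∫ ω, |(∑ i ∈ Finset.range n, a i ω) - h' ω| ∂μ :=
          hT.integral_comp' (fun ω => |(∑ i ∈ Finset.range n, a i ω) - h' ω|)
  have hbh'f : Tendsto
      (fun n => ∫ ω, |((∑ i ∈ Finset.range (n + 1), a i ω) - f ω) - (h' ω - f ω)| ∂μ)
      atTop (𝓝 0) := by
    have h1 : (fun n => ∫ ω, |((∑ i ∈ Finset.range (n + 1), a i ω) - f ω) -
        (h' ω - f ω)| ∂μ) =
        fun n => ∫ ω, |(∑ i ∈ Finset.range (n + 1), a i ω) - h' ω| ∂μ := by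
      funext n
      refine integral_congr_ae (Eventually.of_forall fun ω => ?_)
      congr 1; ring
    rw [h1]
    exact hSh'.comp (tendsto_add_atTop_nat 1)
  have hkey : k =ᵐ[μ] fun ω => h' ω - f ω := by
    refine gordin_l1_limit_unique (fun n => (hb_int n).sub hk_int)
      (fun n => (hb_int n).sub (hh'_int.sub hf_int)) (hk_int.sub (hh'_int.sub hf_int))
      hbk hbh'f
  -- the decomposition
  have hFm1le : F0.comap ⇑T.symm ≤ mΩ :=
    Measurable.comap_le (T.symm.measurable.mono le_rfl hF0le)
  have hFm1F0 : F0.comap ⇑T.symm ≤ F0 := by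
    calc F0.comap ⇑T.symm ≤ (F0.comap T).comap ⇑T.symm := MeasurableSpace.comap_mono hF0T
      _ = F0.comap (⇑T ∘ ⇑T.symm) := by rw [MeasurableSpace.comap_comp]
      _ = F0 := by rw [MeasurableEquiv.self_comp_symm, MeasurableSpace.comap_id]
  have hTs : MeasurePreserving ⇑T.symm μ μ := MeasurePreserving.symm T hT
  set g : Ω → ℝ := fun ω => k (T.symm ω) with hg_def
  set m : Ω → ℝ := fun ω => h' ω - g ω with hm_def
  have hg_int : Integrable g μ :=
    (hTs.integrable_comp hk_int.aestronglyMeasurable).mpr hk_int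
  have hm_int : Integrable m μ := hh'_int.sub hg_int
  have hTsymmF0 : @Measurable Ω Ω F0 F0 ⇑T.symm := fun A hA => hFm1F0 _ ⟨A, hA, rfl⟩
  have hk_measF0 : Measurable[F0] k := stronglyMeasurable_condExp.measurable
  have hg_measF0 : Measurable[F0] g := hk_measF0.comp hTsymmF0
  have hm_measF0 : Measurable[F0] m :=
    (stronglyMeasurable_condExp.measurable : Measurable[F0] h').sub hg_measF0
  have hzIter : MeasurableSpace.comap (zIter T (-1)) F0 = F0.comap ⇑T.symm := by
    have : zIter T (-1) = ⇑T.symm := by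
      funext ω; simp [zIter]
    rw [this]
  refine ⟨m, g, hm_int, hg_int, hm_measF0, ?_, ?_⟩
  · rw [hzIter]
    have htr := gordin_condexp_comp_equiv μ T.symm hTs F0 hF0le _ hh'T_int
    have heq : (fun ω => h' (T (T.symm ω))) = h' := by
      funext ω; rw [MeasurableEquiv.apply_symm_apply]
    rw [heq] at htr
    -- htr : g =ᵐ[μ] μ[h' | F0.comap T.symm]
    have hTsymmFm1 : @Measurable Ω Ω (F0.comap ⇑T.symm) F0 ⇑T.symm := fun A hA => ⟨A, hA, rfl⟩
    have hg_sm : StronglyMeasurable[F0.comap ⇑T.symm] g :=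
      stronglyMeasurable_condExp.comp_measurable hTsymmFm1
    have hcg : μ[g|F0.comap ⇑T.symm] = g :=
      condExp_of_stronglyMeasurable hFm1le hg_sm hg_int
    have hsub : μ[m|F0.comap ⇑T.symm] =ᵐ[μ]
        μ[h'|F0.comap ⇑T.symm] - μ[g|F0.comap ⇑T.symm] := condExp_sub hh'_int hg_int _
    filter_upwards [hsub, htr] with ω h1 h2
    rw [Pi.zero_apply, h1, Pi.sub_apply, hcg, ← h2]
    simp [hg_def, ← hk_def]
  · filter_upwards [hkey] with ω hω
    rw [hm_def, hg_def]
    simp only [MeasurableEquiv.symm_apply_apply]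
    rw [hω]
    ring
end

section
/- Let T and S be commuting bijective bimeasurable transformations of a probability space (Ω, 𝒜, ℙ) preserving ℙ, with S ergodic, and write Uf = f∘T, Vf = f∘S. Then for every centered g ∈ L¹(ℙ), lim_{n→∞} (1/n) ‖Σ_{j=1}^{n} (Vʲg − UⁿVʲg)‖₁ = 0. -/
open MeasureTheory Filter ProbabilityTheory Topology
open scoped ENNReal NNReal

section Aux

variable {Ω : Type*} [mΩ : MeasurableSpace Ω] {μ : Measure Ω} {φ : Ω → Ω}

private lemma ae_comp_mp (hφ : MeasurePreserving φ μ μ) {f g : Ω → ℝ} (h : f =ᵐ[μ] g) :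
    (fun ω => f (φ ω)) =ᵐ[μ] fun ω => g (φ ω) := by
  have h0 : μ {x | ¬ f x = g x} = 0 := ae_iff.1 h
  have h1 := hφ.quasiMeasurePreserving.preimage_null h0
  exact ae_iff.2 (by simpa [Set.preimage_setOf_eq] using h1)

private lemma integral_comp_mp (hφ : MeasurePreserving φ μ μ) {f : Ω → ℝ}
    (hf : AEStronglyMeasurable f μ) : ∫ ω, f (φ ω) ∂μ = ∫ ω, f ω ∂μ := by
  rw [← integral_map hφ.measurable.aemeasurable (by rwa [hφ.map_eq]), hφ.map_eq]

private lemma integrable_comp_mp (hφ : MeasurePreserving φ μ μ) {f : Ω → ℝ}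
    (hf : Integrable f μ) : Integrable (fun ω => f (φ ω)) μ :=
  memLp_one_iff_integrable.1 ((memLp_one_iff_integrable.2 hf).comp_measurePreserving hφ)

variable [IsProbabilityMeasure μ]

set_option synthInstance.maxHeartbeats 1000000 in
set_option maxHeartbeats 1000000 in
/-- The L² mean ergodic theorem, in integral form. -/
private lemma tendsto_L2_birkhoff {S : Ω → Ω} (hS : MeasurePreserving S μ μ)
    (hSerg : Ergodic S μ) {h : Ω → ℝ} (hh : MemLp h 2 μ) (hc : ∫ ω, h ω ∂μ = 0) :
    Tendsto (fun n : ℕ => (∫ ω, |∑ k ∈ Finset.range n, h (S^[k] ω)| ∂μ) / n)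
      atTop (𝓝 0) := by
  set U : Lp ℝ 2 μ →L[ℝ] Lp ℝ 2 μ :=
    (Lp.compMeasurePreservingₗᵢ ℝ S hS).toContinuousLinearMap with hUdef
  set y : Lp ℝ 2 μ := hh.toLp h with hy
  have hUv : ∀ v : Lp ℝ 2 μ, ⇑(U v) =ᵐ[μ] fun ω => v (S ω) := by
    intro v
    have hv : U v = Lp.compMeasurePreserving S hS v := rfl
    rw [hv]
    exact Lp.coeFn_compMeasurePreserving v hS
  have hiter : ∀ n : ℕ, ⇑((⇑U)^[n] y) =ᵐ[μ] fun ω => h (S^[n] ω) := by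
    intro n; induction n with
    | zero => simpa using hh.coeFn_toLp
    | succ n ih =>
      rw [Function.iterate_succ_apply']
      refine ((hUv _).trans ((ae_comp_mp hS ih).trans ?_))
      exact Filter.EventuallyEq.of_eq
        (funext fun ω => congrArg h (Function.iterate_succ_apply S n ω).symm)
  have hsum : ∀ n : ℕ, ⇑(∑ k ∈ Finset.range n, (⇑U)^[k] y) =ᵐ[μ]
      fun ω => ∑ k ∈ Finset.range n, h (S^[k] ω) := by
    intro n; induction n with
    | zero => simp only [Finset.sum_range_zero]; exact Lp.coeFn_zero ℝ 2 μ
    | succ n ih =>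
      rw [Finset.sum_range_succ]
      refine (Lp.coeFn_add _ _).trans ?_
      filter_upwards [ih, hiter n] with ω h1 h2
      simp only [Pi.add_apply, h1, h2, Finset.sum_range_succ]
  have havg : ∀ n : ℕ, ⇑(birkhoffAverage ℝ (⇑U) _root_.id n y) =ᵐ[μ]
      fun ω => (n : ℝ)⁻¹ * ∑ k ∈ Finset.range n, h (S^[k] ω) := by
    intro n
    have h1 : birkhoffAverage ℝ (⇑U) _root_.id n y
        = (n : ℝ)⁻¹ • ∑ k ∈ Finset.range n, (⇑U)^[k] y := by
      simp [birkhoffAverage, birkhoffSum]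
    rw [h1]
    refine (Lp.coeFn_smul _ _).trans ?_
    filter_upwards [hsum n] with ω hω
    simp only [Pi.smul_apply, smul_eq_mul, hω]
  -- the projection of `y` to the fixed subspace vanishes
  have hproj : ((Submodule.orthogonalProjectionOnto (U.eqLocus (1 : Lp ℝ 2 μ →L[ℝ] Lp ℝ 2 μ)) y : _) : Lp ℝ 2 μ) = 0 := by
    have hyo : y ∈ (U.eqLocus (1 : Lp ℝ 2 μ →L[ℝ] Lp ℝ 2 μ))ᗮ := by
      rw [Submodule.mem_orthogonal]
      intro z hz
      rw [LinearMap.mem_eqLocus] at hz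
      have hz1 : Lp.compMeasurePreserving S hS z = z := by
        have h1z : (1 : Lp ℝ 2 μ →L[ℝ] Lp ℝ 2 μ) z = z := rfl
        change U z = z at hz
        exact hz
      have hz2 : (z : Ω →ₘ[μ] ℝ).compMeasurePreserving S hS = (z : Ω →ₘ[μ] ℝ) := by
        have := congrArg Subtype.val hz1
        simpa using this
      obtain ⟨c, hcz⟩ := hSerg.eq_const_of_compMeasurePreserving_eq (g := (z : Ω →ₘ[μ] ℝ)) hz2
      have hzc : ⇑z =ᵐ[μ] fun _ => c := by
        have : ⇑z = ⇑((z : Ω →ₘ[μ] ℝ)) := rfl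
        rw [this, hcz]
        exact AEEqFun.coeFn_const Ω c
      have hinner : (inner ℝ z y : ℝ) = ∫ ω, z ω * y ω ∂μ := by
        rw [MeasureTheory.L2.inner_def]
        simp [RCLike.inner_apply, mul_comm]
      rw [hinner]
      have : ∫ ω, z ω * y ω ∂μ = ∫ ω, c * h ω ∂μ := by
        apply integral_congr_ae
        filter_upwards [hzc, hh.coeFn_toLp] with ω h1 h2
        rw [h1, h2]
      rw [this, integral_const_mul, hc, mul_zero]
    exact congrArg Subtype.val
      (Submodule.orthogonalProjectionOnto_apply_of_mem_orthogonal hyo)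
  have hUn : ‖U‖ ≤ 1 := by
    apply ContinuousLinearMap.opNorm_le_bound _ zero_le_one
    intro v
    have hv : U v = Lp.compMeasurePreserving S hS v := rfl
    rw [hv, Lp.norm_compMeasurePreserving v hS, one_mul]
  have hvn := U.tendsto_birkhoffAverage_orthogonalProjection hUn y
  rw [hproj] at hvn
  have hnorm : Tendsto (fun n => ‖birkhoffAverage ℝ (⇑U) _root_.id n y‖) atTop (𝓝 0) := by
    simpa using hvn.norm
  refine squeeze_zero (fun n => ?_) (fun n => ?_) hnorm
  · exact div_nonneg (integral_nonneg fun ω => abs_nonneg _) n.cast_nonneg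
  · set A := birkhoffAverage ℝ (⇑U) _root_.id n y with hA
    have e1 : (∫ ω, |∑ k ∈ Finset.range n, h (S^[k] ω)| ∂μ) / n = ∫ ω, ‖A ω‖ ∂μ := by
      rw [div_eq_inv_mul, ← integral_const_mul]
      apply (integral_congr_ae ?_).symm
      filter_upwards [havg n] with ω hω
      rw [hω]
      simp [abs_mul]
    rw [e1]
    have e2 : ∫ ω, ‖A ω‖ ∂μ = (eLpNorm (⇑A) 1 μ).toReal := by
      rw [integral_norm_eq_lintegral_enorm (Lp.aestronglyMeasurable A),
        eLpNorm_one_eq_lintegral_enorm]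
    rw [e2, Lp.norm_def]
    exact ENNReal.toReal_mono (Lp.eLpNorm_ne_top A)
      (eLpNorm_le_eLpNorm_of_exponent_le one_le_two (Lp.aestronglyMeasurable A))

/-- The L¹ mean ergodic theorem, in integral form. -/
private lemma tendsto_L1_birkhoff {S : Ω → Ω} (hS : MeasurePreserving S μ μ)
    (hSerg : Ergodic S μ) {g : Ω → ℝ} (hg : Integrable g μ) (hc : ∫ ω, g ω ∂μ = 0) :
    Tendsto (fun n : ℕ => (∫ ω, |∑ k ∈ Finset.range n, g (S^[k] ω)| ∂μ) / n)
      atTop (𝓝 0) := by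
  rw [Metric.tendsto_atTop]
  intro ε hε
  set δ := ε / 4 with hδ
  have hδ0 : 0 < δ := by rw [hδ]; linarith
  obtain ⟨s, hs_close, hs_mem⟩ := (memLp_one_iff_integrable.2 hg).exists_simpleFunc_eLpNorm_sub_lt
    (p := 1) ENNReal.one_ne_top (ε := ENNReal.ofReal δ) (by simpa using hδ0)
  have hs_int : Integrable (⇑s) μ := memLp_one_iff_integrable.1 hs_mem
  -- ∫ |g - s| < δ
  have hgs_int : Integrable (g - ⇑s) μ := hg.sub hs_int
  have hgs : ∫ ω, |g ω - s ω| ∂μ < δ := by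
    have e1 : ∫ ω, |g ω - s ω| ∂μ = (eLpNorm (g - ⇑s) 1 μ).toReal := by
      calc ∫ ω, |g ω - s ω| ∂μ = ∫ ω, ‖(g - ⇑s) ω‖ ∂μ := by
            simp [Real.norm_eq_abs]
        _ = (eLpNorm (g - ⇑s) 1 μ).toReal := by
            rw [integral_norm_eq_lintegral_enorm hgs_int.aestronglyMeasurable,
              eLpNorm_one_eq_lintegral_enorm]
    rw [e1]
    exact ENNReal.toReal_lt_of_lt_ofReal hs_close
  set m := ∫ ω, s ω ∂μ with hm
  set h : Ω → ℝ := fun ω => s ω - m with hh_def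
  have hh2 : MemLp h 2 μ := ((s.memLp_top μ).mono_exponent le_top).sub
    (memLp_const m)
  have hh_int : Integrable h μ := hs_int.sub (integrable_const m)
  have hh_cent : ∫ ω, h ω ∂μ = 0 := by
    rw [integral_sub hs_int (integrable_const m)]
    simp [hm]
  have hm_small : |m| < δ := by
    have : m = ∫ ω, (s ω - g ω) ∂μ := by
      rw [integral_sub hs_int hg, hc, sub_zero]
    rw [this]
    calc |∫ ω, (s ω - g ω) ∂μ| ≤ ∫ ω, |s ω - g ω| ∂μ := by
          simpa [Real.norm_eq_abs] using
            norm_integral_le_integral_norm (μ := μ) (fun ω => s ω - g ω)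
      _ = ∫ ω, |g ω - s ω| ∂μ := by simp_rw [abs_sub_comm]
      _ < δ := hgs
  set φ : Ω → ℝ := fun ω => g ω - h ω with hφ_def
  have hφ_int : Integrable φ μ := hg.sub hh_int
  have hgs_abs : Integrable (fun ω => |g ω - s ω|) μ := hgs_int.abs
  have hφ_small : ∫ ω, |φ ω| ∂μ < 2 * δ := by
    have hb : ∀ ω, |φ ω| ≤ |g ω - s ω| + |m| := by
      intro ω
      have : φ ω = (g ω - s ω) + m := by simp [hφ_def, hh_def]; ring
      rw [this]
      exact (abs_add_le _ _)
    calc ∫ ω, |φ ω| ∂μ ≤ ∫ ω, (|g ω - s ω| + |m|) ∂μ :=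
          integral_mono hφ_int.abs (hgs_abs.add (integrable_const _)) hb
      _ = (∫ ω, |g ω - s ω| ∂μ) + |m| := by
          rw [integral_add hgs_abs (integrable_const _)]
          simp
      _ < δ + δ := add_lt_add hgs hm_small
      _ = 2 * δ := by ring
  -- choose N for h
  have hL2 := tendsto_L2_birkhoff hS hSerg hh2 hh_cent
  rw [Metric.tendsto_atTop] at hL2
  obtain ⟨N, hN⟩ := hL2 δ hδ0
  refine ⟨N, fun n hn => ?_⟩
  have hN' := hN n hn
  rw [Real.dist_eq, sub_zero] at hN' ⊢
  -- integrability of iterated sums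
  have hint : ∀ (u : Ω → ℝ), Integrable u μ →
      Integrable (fun ω => ∑ k ∈ Finset.range n, u (S^[k] ω)) μ := fun u hu =>
    integrable_finset_sum _ (fun k _ => integrable_comp_mp (hS.iterate k) hu)
  have habs : ∀ (u : Ω → ℝ), Integrable u μ →
      (∫ ω, |∑ k ∈ Finset.range n, u (S^[k] ω)| ∂μ) ≤ n * ∫ ω, |u ω| ∂μ := by
    intro u hu
    calc (∫ ω, |∑ k ∈ Finset.range n, u (S^[k] ω)| ∂μ)
        ≤ ∫ ω, ∑ k ∈ Finset.range n, |u (S^[k] ω)| ∂μ := by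
          apply integral_mono (hint u hu).abs
            (integrable_finset_sum _ fun k _ => (integrable_comp_mp (hS.iterate k) hu).abs)
          exact fun ω => Finset.abs_sum_le_sum_abs _ _
      _ = ∑ k ∈ Finset.range n, ∫ ω, |u (S^[k] ω)| ∂μ :=
          integral_finset_sum _ (fun k _ => (integrable_comp_mp (hS.iterate k) hu).abs)
      _ = ∑ k ∈ Finset.range n, ∫ ω, |u ω| ∂μ := by
          refine Finset.sum_congr rfl fun k _ => ?_
          exact integral_comp_mp (hS.iterate k) hu.abs.aestronglyMeasurable
      _ = n * ∫ ω, |u ω| ∂μ := by simp [Finset.sum_const, mul_comm]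
  have key : (∫ ω, |∑ k ∈ Finset.range n, g (S^[k] ω)| ∂μ) / n
      ≤ (∫ ω, |φ ω| ∂μ) + (∫ ω, |∑ k ∈ Finset.range n, h (S^[k] ω)| ∂μ) / n := by
    rcases Nat.eq_zero_or_pos n with rfl | hn0
    · simp [integral_nonneg (μ := μ) (f := fun ω => |φ ω|) fun ω => abs_nonneg (φ ω)]
    have hsplit : (∫ ω, |∑ k ∈ Finset.range n, g (S^[k] ω)| ∂μ)
        ≤ (∫ ω, |∑ k ∈ Finset.range n, φ (S^[k] ω)| ∂μ)
          + (∫ ω, |∑ k ∈ Finset.range n, h (S^[k] ω)| ∂μ) := by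
      rw [← integral_add (hint φ hφ_int).abs (hint h hh_int).abs]
      apply integral_mono (hint g hg).abs ((hint φ hφ_int).abs.add (hint h hh_int).abs)
      intro ω
      have heq : ∑ k ∈ Finset.range n, g (S^[k] ω)
          = (∑ k ∈ Finset.range n, φ (S^[k] ω)) + ∑ k ∈ Finset.range n, h (S^[k] ω) := by
        rw [← Finset.sum_add_distrib]
        refine Finset.sum_congr rfl fun k _ => ?_
        simp [hφ_def]
      simp only [Pi.add_apply]
      rw [heq]
      exact abs_add_le _ _
    have h2 : (∫ ω, |∑ k ∈ Finset.range n, φ (S^[k] ω)| ∂μ) / n ≤ ∫ ω, |φ ω| ∂μ := by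
      rw [div_le_iff₀ (by exact_mod_cast hn0)]
      calc (∫ ω, |∑ k ∈ Finset.range n, φ (S^[k] ω)| ∂μ) ≤ n * ∫ ω, |φ ω| ∂μ := habs φ hφ_int
        _ = (∫ ω, |φ ω| ∂μ) * n := mul_comm _ _
    calc (∫ ω, |∑ k ∈ Finset.range n, g (S^[k] ω)| ∂μ) / n
        ≤ ((∫ ω, |∑ k ∈ Finset.range n, φ (S^[k] ω)| ∂μ)
          + (∫ ω, |∑ k ∈ Finset.range n, h (S^[k] ω)| ∂μ)) / n := by
          gcongr
      _ = (∫ ω, |∑ k ∈ Finset.range n, φ (S^[k] ω)| ∂μ) / n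
          + (∫ ω, |∑ k ∈ Finset.range n, h (S^[k] ω)| ∂μ) / n := add_div _ _ _
      _ ≤ (∫ ω, |φ ω| ∂μ) + (∫ ω, |∑ k ∈ Finset.range n, h (S^[k] ω)| ∂μ) / n := by
          exact add_le_add_left h2 _
  have hnn : 0 ≤ (∫ ω, |∑ k ∈ Finset.range n, g (S^[k] ω)| ∂μ) / n :=
    div_nonneg (integral_nonneg fun ω => abs_nonneg _) n.cast_nonneg
  have hhn : |(∫ ω, |∑ k ∈ Finset.range n, h (S^[k] ω)| ∂μ) / n|
      = (∫ ω, |∑ k ∈ Finset.range n, h (S^[k] ω)| ∂μ) / n :=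
    abs_of_nonneg (div_nonneg (integral_nonneg fun ω => abs_nonneg _) n.cast_nonneg)
  rw [abs_of_nonneg hnn]
  rw [hhn] at hN'
  calc (∫ ω, |∑ k ∈ Finset.range n, g (S^[k] ω)| ∂μ) / n
      ≤ (∫ ω, |φ ω| ∂μ) + (∫ ω, |∑ k ∈ Finset.range n, h (S^[k] ω)| ∂μ) / n := key
    _ < 2 * δ + δ := add_lt_add hφ_small hN'
    _ < ε := by rw [hδ]; linarith

end Aux

/-- Let `T` and `S` be commuting bijective bimeasurable transformations preserving `ℙ`, with
`S` ergodic. Then for every centered `g ∈ L¹(ℙ)`,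
`lim_{n→∞} (1/n) ‖Σ_{j=1}^{n} (Vʲg − UⁿVʲg)‖₁ = 0`. -/
theorem cesaro_coboundary_l1_negligible
    {Ω : Type*} [mΩ : MeasurableSpace Ω] (μ : Measure Ω) [IsProbabilityMeasure μ]
    (T S : Ω ≃ᵐ Ω) (hcomm : ∀ ω, T (S ω) = S (T ω))
    (hT : MeasurePreserving T μ μ) (hS : MeasurePreserving S μ μ)
    (hSerg : Ergodic S μ)
    (g : Ω → ℝ) (hg_int : Integrable g μ) (hg_cent : ∫ ω, g ω ∂μ = 0) :
    Tendsto (fun n : ℕ =>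
        (∫ ω, |∑ j ∈ Finset.Icc 1 n,
            (g ((⇑S)^[j] ω) - g ((⇑T)^[n] ((⇑S)^[j] ω)))| ∂μ) / n)
      atTop (𝓝 0) := by
  set b : ℕ → ℝ := fun n => ∫ ω, |∑ k ∈ Finset.range n, g ((⇑S)^[k] ω)| ∂μ with hb
  have hbt : Tendsto (fun n => b n / n) atTop (𝓝 0) :=
    tendsto_L1_birkhoff hS hSerg hg_int hg_cent
  set a : ℕ → ℝ := fun n => ∫ ω, |∑ j ∈ Finset.Icc 1 n,
      (g ((⇑S)^[j] ω) - g ((⇑T)^[n] ((⇑S)^[j] ω)))| ∂μ with ha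
  have hcomm' : Function.Commute ⇑T ⇑S := hcomm
  -- h n ω := ∑_{j ∈ Icc 1 n} g (S^[j] ω)
  set H : ℕ → Ω → ℝ := fun n ω => ∑ j ∈ Finset.Icc 1 n, g ((⇑S)^[j] ω) with hH
  have hH_int : ∀ n, Integrable (H n) μ := fun n =>
    integrable_finset_sum _ fun j _ => integrable_comp_mp (hS.iterate j) hg_int
  have hab : ∀ n, a n ≤ 2 * b n := by
    intro n
    have e1 : ∀ ω, ∑ j ∈ Finset.Icc 1 n,
        (g ((⇑S)^[j] ω) - g ((⇑T)^[n] ((⇑S)^[j] ω))) = H n ω - H n ((⇑T)^[n] ω) := by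
      intro ω
      rw [Finset.sum_sub_distrib]
      congr 1
      refine Finset.sum_congr rfl fun j _ => ?_
      rw [(hcomm'.iterate_iterate n j).eq ω]
    have e2 : ∫ ω, |H n ((⇑T)^[n] ω)| ∂μ = ∫ ω, |H n ω| ∂μ :=
      integral_comp_mp (hT.iterate n) (hH_int n).abs.aestronglyMeasurable
    have e3 : ∫ ω, |H n ω| ∂μ = b n := by
      have hstep : ∀ ω, H n ω = (fun ω' => ∑ k ∈ Finset.range n, g ((⇑S)^[k] ω')) (S ω) := by
        intro ω
        show ∑ j ∈ Finset.Icc 1 n, g ((⇑S)^[j] ω) = _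
        rw [← Finset.Ico_add_one_right_eq_Icc, Finset.sum_Ico_eq_sum_range]
        simp only [Nat.add_sub_cancel]
        refine Finset.sum_congr rfl fun k _ => ?_
        rw [add_comm 1 k, Function.iterate_succ_apply]
      calc ∫ ω, |H n ω| ∂μ
          = ∫ ω, (fun ω' => |∑ k ∈ Finset.range n, g ((⇑S)^[k] ω')|) (S ω) ∂μ := by
            refine integral_congr_ae (.of_forall fun ω => ?_)
            exact congrArg abs (hstep ω)
        _ = b n := integral_comp_mp hS
            (integrable_finset_sum (μ := μ) _ fun k _ =>
              integrable_comp_mp (hS.iterate k) hg_int).abs.aestronglyMeasurable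
    calc a n = ∫ ω, |H n ω - H n ((⇑T)^[n] ω)| ∂μ := by
          rw [ha]
          exact integral_congr_ae (.of_forall fun ω => congrArg abs (e1 ω))
      _ ≤ ∫ ω, (|H n ω| + |H n ((⇑T)^[n] ω)|) ∂μ := by
          apply integral_mono ((hH_int n).sub (integrable_comp_mp (hT.iterate n)
            (hH_int n))).abs (((hH_int n).abs).add (integrable_comp_mp (hT.iterate n)
            (hH_int n)).abs)
          exact fun ω => abs_sub _ _
      _ = (∫ ω, |H n ω| ∂μ) + ∫ ω, |H n ((⇑T)^[n] ω)| ∂μ :=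
          integral_add (hH_int n).abs (integrable_comp_mp (hT.iterate n) (hH_int n)).abs
      _ = 2 * b n := by rw [e2, e3]; ring
  have h2b : Tendsto (fun n => 2 * (b n / n)) atTop (𝓝 0) := by
    simpa using hbt.const_mul 2
  refine squeeze_zero (fun n => ?_) (fun n => ?_) h2b
  · exact div_nonneg (integral_nonneg fun ω => abs_nonneg _) n.cast_nonneg
  · rcases Nat.eq_zero_or_pos n with rfl | hn0
    · simp
    · have hn' : (0:ℝ) < n := by exact_mod_cast hn0
      rw [← mul_div_assoc]
      gcongr
      exact hab n
end
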